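/- Let G be the theta graph consisting of m-1 internally disjoint paths of length 3 together with one edge, all joining the same pair of vertices u and v (so G has 3(m-1)+1 edges). Then the edge-bandwidth of G equals \lceil 3(m-1)/2 \rceil. -/

import Mathlib

open SimpleGraph

/-- The edge-bandwidth of a finite simple graph: the minimum over injective integer
labelings of the edges of the maximum difference of labels on incident edges. -/
noncomputable def edgeBW {V : Type*} [Fintype V] (G : SimpleGraph V) : ℕ :=
  sInf {k : ℕ | ∃ f : G.edgeSet → ℤ, Function.Injective f ∧
    ∀ e e' : G.edgeSet, e ≠ e' → (∃ v, v ∈ (e : Sym2 V) ∧ v ∈ (e' : Sym2 V)) →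
      ((f e - f e').natAbs ≤ k)}

/-- The bandwidth of a finite simple graph: the minimum over injective integer
labelings of the vertices of the maximum difference of labels on adjacent vertices. -/
noncomputable def bw {V : Type*} [Fintype V] (G : SimpleGraph V) : ℕ :=
  sInf {k : ℕ | ∃ g : V → ℤ, Function.Injective g ∧
    ∀ u v, G.Adj u v → (g u - g v).natAbs ≤ k}
/-- Vertex type for the theta graph $\Theta(3,\dots,3,1)$: the endpoints $u,v$ plus
two internal vertices on each of the $m-1$ paths of length 3. -/
abbrev ThetaVert (m : ℕ) := Unit ⊕ (Unit ⊕ (Fin (m - 1) × Fin 2))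

/-- The theta graph consisting of $m-1$ internally disjoint paths of length 3
together with one edge, all joining the same pair of vertices $u,v$. -/
def thetaGraph (m : ℕ) : SimpleGraph (ThetaVert m) :=
  SimpleGraph.fromEdgeSet
    ({s(Sum.inl (), Sum.inr (Sum.inl ()))} ∪
      ⋃ i : Fin (m - 1),
        {s(Sum.inl (), Sum.inr (Sum.inr (i, 0))),
         s(Sum.inr (Sum.inr (i, 0)), Sum.inr (Sum.inr (i, 1))),
         s(Sum.inr (Sum.inr (i, 1)), Sum.inr (Sum.inl ()))})


section ThetaAux
open Finset

/-- Staggered case of the counting argument. -/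
lemma theta_staggered (n k : ℕ) (P Q M : Fin n → ℤ) (t a A b B : ℤ)
    (hval : Function.Injective (fun x : (Fin n ⊕ Fin n) ⊕ (Fin n ⊕ Unit) =>
      Sum.elim (Sum.elim P Q) (Sum.elim M fun _ => t) x))
    (haP : ∀ i, a ≤ P i) (hPA : ∀ i, P i ≤ A) (hat : a ≤ t) (htA : t ≤ A)
    (hbQ : ∀ i, b ≤ Q i) (hQB : ∀ i, Q i ≤ B) (hbt : b ≤ t) (htB : t ≤ B)
    (hAa : A - a ≤ k) (hBb : B - b ≤ k)
    (hQM : ∀ i, Q i - M i ≤ k) (hMP : ∀ i, M i - P i ≤ k)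
    (hab : a ≤ b) (hAB : A ≤ B) : 3 * n ≤ 2 * k := by
  classical
  have hPinj : Function.Injective P := by
    intro i j h
    have := @hval (Sum.inl (Sum.inl i)) (Sum.inl (Sum.inl j)) (by simpa using h)
    simpa using this
  have hQinj : Function.Injective Q := by
    intro i j h
    have := @hval (Sum.inl (Sum.inr i)) (Sum.inl (Sum.inr j)) (by simpa using h)
    simpa using this
  have hPQ : ∀ i j, P i ≠ Q j := by
    intro i j h
    have := @hval (Sum.inl (Sum.inl i)) (Sum.inl (Sum.inr j)) (by simpa using h)
    simp at this
  have hPt : ∀ i, P i ≠ t := by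
    intro i h
    have := @hval (Sum.inl (Sum.inl i)) (Sum.inr (Sum.inr ())) (by simpa using h)
    simp at this
  have hQt : ∀ i, Q i ≠ t := by
    intro i h
    have := @hval (Sum.inl (Sum.inr i)) (Sum.inr (Sum.inr ())) (by simpa using h)
    simp at this
  set WL := Finset.univ.filter (fun i : Fin n => M i < a) with hWL
  set WR := Finset.univ.filter (fun i : Fin n => B < M i) with hWR
  set U3 := Finset.univ.filter (fun i : Fin n => b ≤ P i ∧ P i ≤ A) with hU3
  set V3 := Finset.univ.filter (fun i : Fin n => b ≤ Q i ∧ Q i ≤ A) with hV3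
  -- Step 1: global count
  have h1 : 3 * n + 1 ≤ WL.card + (Finset.Icc a B).card + WR.card := by
    have hcov : ∀ x : (Fin n ⊕ Fin n) ⊕ (Fin n ⊕ Unit),
        x ∈ Finset.univ →
        (Sum.elim (Sum.elim P Q) (Sum.elim M fun _ => t) x)
          ∈ (WL.image M ∪ Finset.Icc a B) ∪ WR.image M := by
      rintro ((i|i)|(i|⟨⟩)) -
      · simp only [Sum.elim_inl, mem_union, mem_Icc]
        exact Or.inl (Or.inr ⟨haP i, (hPA i).trans hAB⟩)
      · simp only [Sum.elim_inl, Sum.elim_inr, mem_union, mem_Icc]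
        exact Or.inl (Or.inr ⟨hab.trans (hbQ i), hQB i⟩)
      · simp only [Sum.elim_inr, Sum.elim_inl, mem_union, mem_Icc]
        rcases lt_or_ge (M i) a with h | h
        · exact Or.inl (Or.inl (mem_image_of_mem M (by simp [hWL, h])))
        · rcases le_or_gt (M i) B with h' | h'
          · exact Or.inl (Or.inr ⟨h, h'⟩)
          · exact Or.inr (mem_image_of_mem M (by simp [hWR, h']))
      · simp only [Sum.elim_inr, mem_union, mem_Icc]
        exact Or.inl (Or.inr ⟨hat, htB⟩)
    have hle := Finset.card_le_card_of_injOn _ hcov hval.injOn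
    have hcu : ((WL.image M ∪ Finset.Icc a B) ∪ WR.image M).card
        ≤ WL.card + (Finset.Icc a B).card + WR.card := by
      calc ((WL.image M ∪ Finset.Icc a B) ∪ WR.image M).card
          ≤ (WL.image M ∪ Finset.Icc a B).card + (WR.image M).card :=
            Finset.card_union_le _ _
        _ ≤ ((WL.image M).card + (Finset.Icc a B).card) + (WR.image M).card := by
            exact Nat.add_le_add_right (Finset.card_union_le _ _) _
        _ ≤ WL.card + (Finset.Icc a B).card + WR.card := by
            gcongr <;> exact Finset.card_image_le
    have hcardu : (Finset.univ : Finset ((Fin n ⊕ Fin n) ⊕ (Fin n ⊕ Unit))).card = 3 * n + 1 := by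
      simp [Fintype.card_sum]; ring
    omega
  -- Step 2: Hall bottom
  have h2 : WL.card ≤ V3.card + (Finset.Icc (A + 1) (a + k - 1)).card := by
    have hsub : WL ⊆ V3 ∪ (Finset.univ.filter (fun i => A + 1 ≤ Q i ∧ Q i ≤ a + k - 1)) := by
      intro i hi
      simp only [hWL, mem_filter, mem_univ, true_and] at hi
      have h1 : Q i ≤ a + k - 1 := by have := hQM i; omega
      rcases le_or_gt (Q i) A with h | h
      · exact mem_union_left _ (by simp [hV3, hbQ i, h])
      · exact mem_union_right _ (by simp only [mem_filter, mem_univ, true_and]; omega)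
    calc WL.card ≤ _ := Finset.card_le_card hsub
      _ ≤ V3.card + (Finset.univ.filter (fun i => A + 1 ≤ Q i ∧ Q i ≤ a + k - 1)).card :=
          Finset.card_union_le _ _
      _ ≤ V3.card + (Finset.Icc (A + 1) (a + k - 1)).card := by
          gcongr
          exact Finset.card_le_card_of_injOn Q (by intro i hi; simp at hi; simp [hi])
            hQinj.injOn
  -- Step 3: Hall top
  have h3 : WR.card ≤ U3.card + (Finset.Icc (B + 1 - k) (b - 1)).card := by
    have hsub : WR ⊆ U3 ∪ (Finset.univ.filter (fun i => B + 1 - k ≤ P i ∧ P i ≤ b - 1)) := by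
      intro i hi
      simp only [hWR, mem_filter, mem_univ, true_and] at hi
      have h1 : B + 1 - k ≤ P i := by have := hMP i; omega
      rcases le_or_gt b (P i) with h | h
      · exact mem_union_left _ (by simp [hU3, h, hPA i])
      · exact mem_union_right _ (by simp only [mem_filter, mem_univ, true_and]; omega)
    calc WR.card ≤ _ := Finset.card_le_card hsub
      _ ≤ U3.card + (Finset.univ.filter (fun i => B + 1 - k ≤ P i ∧ P i ≤ b - 1)).card :=
          Finset.card_union_le _ _
      _ ≤ U3.card + (Finset.Icc (B + 1 - k) (b - 1)).card := by
          gcongr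
          exact Finset.card_le_card_of_injOn P (by intro i hi; simp at hi; simp [hi])
            hPinj.injOn
  -- Step 4: overlap capacity
  have h4 : U3.card + V3.card + 1 ≤ (Finset.Icc b A).card := by
    have hsub : (U3.image P ∪ V3.image Q) ∪ {t} ⊆ Finset.Icc b A := by
      intro z hz
      simp only [mem_union, mem_image, mem_singleton] at hz
      rcases hz with ((⟨i, hi, rfl⟩ | ⟨i, hi, rfl⟩) | rfl)
      · simp only [hU3, mem_filter] at hi; simp [mem_Icc, hi.2.1, hi.2.2]
      · simp only [hV3, mem_filter] at hi; simp [mem_Icc, hi.2.1, hi.2.2]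
      · simp [mem_Icc, hbt, htA]
    have hd1 : Disjoint (U3.image P) (V3.image Q) := by
      rw [Finset.disjoint_left]
      intro z hz1 hz2
      obtain ⟨i, -, rfl⟩ := Finset.mem_image.1 hz1
      obtain ⟨j, -, hj⟩ := Finset.mem_image.1 hz2
      exact hPQ i j hj.symm
    have hd2 : Disjoint ((U3.image P ∪ V3.image Q)) ({t} : Finset ℤ) := by
      rw [Finset.disjoint_right]
      intro z hz h
      rw [Finset.mem_singleton] at hz
      subst hz
      rcases Finset.mem_union.1 h with h | h
      · obtain ⟨i, -, hi⟩ := Finset.mem_image.1 h; exact hPt i hi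
      · obtain ⟨i, -, hi⟩ := Finset.mem_image.1 h; exact hQt i hi
    have := Finset.card_le_card hsub
    rw [Finset.card_union_of_disjoint hd2, Finset.card_union_of_disjoint hd1,
      Finset.card_image_of_injective _ hPinj, Finset.card_image_of_injective _ hQinj] at this
    simpa using this
  rw [Int.card_Icc] at h1 h4
  rw [Int.card_Icc] at h2 h3
  omega

/-- Nested case of the counting argument. -/
lemma theta_nested (n k : ℕ) (P Q : Fin n → ℤ) (t a A b B : ℤ)
    (hPinj : Function.Injective P) (hQinj : Function.Injective Q)
    (hPQ : ∀ i j, P i ≠ Q j) (hPt : ∀ i, P i ≠ t) (hQt : ∀ i, Q i ≠ t)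
    (haP : ∀ i, a ≤ P i) (hPA : ∀ i, P i ≤ A)
    (hbQ : ∀ i, b ≤ Q i) (hQB : ∀ i, Q i ≤ B) (hbt : b ≤ t) (htB : t ≤ B)
    (hAa : A - a ≤ k) (hBA : B ≤ A) (hab : a ≤ b) : 3 * n ≤ 2 * k := by
  classical
  set N1 := Finset.univ.filter (fun i : Fin n => b ≤ P i ∧ P i ≤ B) with hN1
  set N2 := Finset.univ.filter (fun i : Fin n => P i < b) with hN2
  set N3 := Finset.univ.filter (fun i : Fin n => B < P i) with hN3
  have hpart : n ≤ N1.card + N2.card + N3.card := by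
    have hsub : (Finset.univ : Finset (Fin n)) ⊆ (N1 ∪ N2) ∪ N3 := by
      intro i _
      rcases lt_or_ge (P i) b with h | h
      · exact mem_union_left _ (mem_union_right _ (by simp [hN2, h]))
      · rcases le_or_gt (P i) B with h' | h'
        · exact mem_union_left _ (mem_union_left _ (by simp [hN1, h, h']))
        · exact mem_union_right _ (by simp [hN3, h'])
    calc n = (Finset.univ : Finset (Fin n)).card := by simp
      _ ≤ ((N1 ∪ N2) ∪ N3).card := Finset.card_le_card hsub
      _ ≤ (N1 ∪ N2).card + N3.card := Finset.card_union_le _ _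
      _ ≤ N1.card + N2.card + N3.card := Nat.add_le_add_right (Finset.card_union_le _ _) _
  have hn2 : N2.card ≤ (Finset.Icc a (b - 1)).card := by
    refine Finset.card_le_card_of_injOn P ?_ hPinj.injOn
    intro i hi; simp only [hN2, Finset.mem_coe, mem_filter] at hi; simp [mem_Icc, haP i]; omega
  have hn3 : N3.card ≤ (Finset.Icc (B + 1) A).card := by
    refine Finset.card_le_card_of_injOn P ?_ hPinj.injOn
    intro i hi; simp only [hN3, Finset.mem_coe, mem_filter] at hi; simp [mem_Icc, hPA i]; omega
  have hbig : (n + 1) + N1.card ≤ (Finset.Icc b B).card := by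
    have hsub : (Finset.univ.image Q ∪ {t}) ∪ N1.image P ⊆ Finset.Icc b B := by
      intro z hz
      simp only [mem_union, mem_image, mem_singleton] at hz
      rcases hz with ((⟨i, -, rfl⟩ | rfl) | ⟨i, hi, rfl⟩)
      · simp [mem_Icc, hbQ i, hQB i]
      · simp [mem_Icc, hbt, htB]
      · simp only [hN1, mem_filter] at hi; simp [mem_Icc, hi.2.1, hi.2.2]
    have hd1 : Disjoint (Finset.univ.image Q) ({t} : Finset ℤ) := by
      rw [Finset.disjoint_right]
      intro z hz h
      rw [Finset.mem_singleton] at hz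
      subst hz
      obtain ⟨i, -, hi⟩ := Finset.mem_image.1 h; exact hQt i hi
    have hd2 : Disjoint (Finset.univ.image Q ∪ {t}) (N1.image P) := by
      rw [Finset.disjoint_right]
      intro z hz h
      obtain ⟨i, -, rfl⟩ := Finset.mem_image.1 hz
      rcases Finset.mem_union.1 h with h | h
      · obtain ⟨j, -, hj⟩ := Finset.mem_image.1 h; exact hPQ i j hj.symm
      · exact hPt i (Finset.mem_singleton.1 h)
    have := Finset.card_le_card hsub
    rw [Finset.card_union_of_disjoint hd2, Finset.card_union_of_disjoint hd1,
      Finset.card_image_of_injective _ hPinj, Finset.card_image_of_injective _ hQinj] at this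
    simpa using this
  rw [Int.card_Icc] at hn2 hn3 hbig
  omega

/-- The abstract counting lemma for the theta-graph lower bound. -/
lemma theta_abstract (n k : ℕ) (P Q M : Fin n → ℤ) (t : ℤ)
    (hval : Function.Injective (fun x : (Fin n ⊕ Fin n) ⊕ (Fin n ⊕ Unit) =>
      Sum.elim (Sum.elim P Q) (Sum.elim M fun _ => t) x))
    (hPP : ∀ i j, (P i - P j).natAbs ≤ k) (hQQ : ∀ i j, (Q i - Q j).natAbs ≤ k)
    (hPt : ∀ i, (P i - t).natAbs ≤ k) (hQt : ∀ i, (Q i - t).natAbs ≤ k)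
    (hMP : ∀ i, (M i - P i).natAbs ≤ k) (hMQ : ∀ i, (M i - Q i).natAbs ≤ k) :
    3 * n ≤ 2 * k := by
  classical
  have hMinj : Function.Injective M := by
    intro i j h
    have := @hval (Sum.inr (Sum.inl i)) (Sum.inr (Sum.inl j)) (by simpa using h)
    simpa using this
  have hMnP : ∀ i j, M i ≠ P j := by
    intro i j h
    have := @hval (Sum.inr (Sum.inl i)) (Sum.inl (Sum.inl j)) (by simpa using h)
    simp at this
  have hMnQ : ∀ i j, M i ≠ Q j := by
    intro i j h
    have := @hval (Sum.inr (Sum.inl i)) (Sum.inl (Sum.inr j)) (by simpa using h)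
    simp at this
  have hMt' : ∀ i, M i ≠ t := by
    intro i h
    have := @hval (Sum.inr (Sum.inl i)) (Sum.inr (Sum.inr ())) (by simpa using h)
    simp at this
  have hPinj : Function.Injective P := by
    intro i j h
    have := @hval (Sum.inl (Sum.inl i)) (Sum.inl (Sum.inl j)) (by simpa using h)
    simpa using this
  have hQinj : Function.Injective Q := by
    intro i j h
    have := @hval (Sum.inl (Sum.inr i)) (Sum.inl (Sum.inr j)) (by simpa using h)
    simpa using this
  have hPQ : ∀ i j, P i ≠ Q j := by
    intro i j h
    have := @hval (Sum.inl (Sum.inl i)) (Sum.inl (Sum.inr j)) (by simpa using h)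
    simp at this
  have hPt' : ∀ i, P i ≠ t := by
    intro i h
    have := @hval (Sum.inl (Sum.inl i)) (Sum.inr (Sum.inr ())) (by simpa using h)
    simp at this
  have hQt' : ∀ i, Q i ≠ t := by
    intro i h
    have := @hval (Sum.inl (Sum.inr i)) (Sum.inr (Sum.inr ())) (by simpa using h)
    simp at this
  have hval' : Function.Injective (fun x : (Fin n ⊕ Fin n) ⊕ (Fin n ⊕ Unit) =>
      Sum.elim (Sum.elim Q P) (Sum.elim M fun _ => t) x) := by
    intro x y h
    rcases x with ((i|i)|(i|⟨⟩)) <;> rcases y with ((j|j)|(j|⟨⟩)) <;>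
      simp only [Sum.elim_inl, Sum.elim_inr] at h <;>
      first
        | rfl
        | (exact (hPQ _ _ h).elim)
        | (exact (hPQ _ _ h.symm).elim)
        | (exact (hPt' _ h).elim)
        | (exact (hPt' _ h.symm).elim)
        | (exact (hQt' _ h).elim)
        | (exact (hQt' _ h.symm).elim)
        | (exact (hMnP _ _ h).elim)
        | (exact (hMnP _ _ h.symm).elim)
        | (exact (hMnQ _ _ h).elim)
        | (exact (hMnQ _ _ h.symm).elim)
        | (exact (hMt' _ h).elim)
        | (exact (hMt' _ h.symm).elim)
        | (rw [hPinj h])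
        | (rw [hQinj h])
        | (rw [hMinj h])
  set SP : Finset ℤ := insert t (Finset.univ.image P) with hSP
  set SQ : Finset ℤ := insert t (Finset.univ.image Q) with hSQ
  have hSPne : SP.Nonempty := ⟨t, by simp [hSP]⟩
  have hSQne : SQ.Nonempty := ⟨t, by simp [hSQ]⟩
  set a := SP.min' hSPne with ha
  set A := SP.max' hSPne with hA
  set b := SQ.min' hSQne with hb
  set B := SQ.max' hSQne with hB
  have haP : ∀ i, a ≤ P i := fun i => Finset.min'_le _ _ (by simp [hSP])
  have hPA : ∀ i, P i ≤ A := fun i => Finset.le_max' _ _ (by simp [hSP])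
  have hat : a ≤ t := Finset.min'_le _ _ (by simp [hSP])
  have htA : t ≤ A := Finset.le_max' _ _ (by simp [hSP])
  have hbQ : ∀ i, b ≤ Q i := fun i => Finset.min'_le _ _ (by simp [hSQ])
  have hQB : ∀ i, Q i ≤ B := fun i => Finset.le_max' _ _ (by simp [hSQ])
  have hbt : b ≤ t := Finset.min'_le _ _ (by simp [hSQ])
  have htB : t ≤ B := Finset.le_max' _ _ (by simp [hSQ])
  have hAa : A - a ≤ k := by
    have h1 := Finset.max'_mem _ hSPne
    have h2 := Finset.min'_mem _ hSPne
    rw [← hA] at h1; rw [← ha] at h2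
    simp only [hSP, Finset.mem_insert, Finset.mem_image, Finset.mem_univ, true_and] at h1 h2
    rcases h1 with h1 | ⟨i, hi⟩ <;> rcases h2 with h2 | ⟨j, hj⟩
    · omega
    · have := hPt j; rw [hj] at this; omega
    · have := hPt i; rw [hi] at this; omega
    · have := hPP i j; rw [hi, hj] at this; omega
  have hBb : B - b ≤ k := by
    have h1 := Finset.max'_mem _ hSQne
    have h2 := Finset.min'_mem _ hSQne
    rw [← hB] at h1; rw [← hb] at h2
    simp only [hSQ, Finset.mem_insert, Finset.mem_image, Finset.mem_univ, true_and] at h1 h2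
    rcases h1 with h1 | ⟨i, hi⟩ <;> rcases h2 with h2 | ⟨j, hj⟩
    · omega
    · have := hQt j; rw [hj] at this; omega
    · have := hQt i; rw [hi] at this; omega
    · have := hQQ i j; rw [hi, hj] at this; omega
  have hQM : ∀ i, Q i - M i ≤ k := fun i => by have := hMQ i; omega
  have hMP' : ∀ i, M i - P i ≤ k := fun i => by have := hMP i; omega
  have hPM : ∀ i, P i - M i ≤ k := fun i => by have := hMP i; omega
  have hMQ' : ∀ i, M i - Q i ≤ k := fun i => by have := hMQ i; omega
  rcases le_total a b with hab | hab
  · rcases le_total A B with hAB | hAB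
    · exact theta_staggered n k P Q M t a A b B hval haP hPA hat htA hbQ hQB hbt htB
        hAa hBb hQM hMP' hab hAB
    · exact theta_nested n k P Q t a A b B hPinj hQinj hPQ hPt' hQt'
        haP hPA hbQ hQB hbt htB hAa hAB hab
  · rcases le_total A B with hAB | hAB
    · exact theta_nested n k Q P t b B a A hQinj hPinj (fun i j => (hPQ j i).symm) hQt' hPt'
        hbQ hQB haP hPA hat htA hBb hAB hab
    · exact theta_staggered n k Q P M t b B a A hval' hbQ hQB hbt htB haP hPA hat htA
        hBb hAa hPM hMQ' hab hAB

end ThetaAux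

lemma theta_mem_edgeSet (m : ℕ) (e : Sym2 (ThetaVert m)) :
    e ∈ (thetaGraph m).edgeSet ↔
      e = s(Sum.inl (), Sum.inr (Sum.inl ())) ∨
      ∃ i : Fin (m - 1),
        e = s(Sum.inl (), Sum.inr (Sum.inr (i, 0))) ∨
        e = s(Sum.inr (Sum.inr (i, 0)), Sum.inr (Sum.inr (i, 1))) ∨
        e = s(Sum.inr (Sum.inr (i, 1)), Sum.inr (Sum.inl ())) := by
  rw [thetaGraph, edgeSet_fromEdgeSet]
  constructor
  · rintro ⟨h1, -⟩
    simpa [Set.mem_iUnion] using h1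
  · intro h
    constructor
    · simpa [Set.mem_iUnion] using h
    · rcases h with h | ⟨i, h | h | h⟩ <;> subst h <;>
        simp [Sym2.isDiag_iff_proj_eq]

/-- The central edge of the theta graph. -/
def thE0 (m : ℕ) : (thetaGraph m).edgeSet :=
  ⟨s(Sum.inl (), Sum.inr (Sum.inl ())), (theta_mem_edgeSet m _).2 (Or.inl rfl)⟩

/-- The edge of the `i`-th path incident to `u`. -/
def thEU (m : ℕ) (i : Fin (m - 1)) : (thetaGraph m).edgeSet :=
  ⟨s(Sum.inl (), Sum.inr (Sum.inr (i, 0))),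
    (theta_mem_edgeSet m _).2 (Or.inr ⟨i, Or.inl rfl⟩)⟩

/-- The middle edge of the `i`-th path. -/
def thEM (m : ℕ) (i : Fin (m - 1)) : (thetaGraph m).edgeSet :=
  ⟨s(Sum.inr (Sum.inr (i, 0)), Sum.inr (Sum.inr (i, 1))),
    (theta_mem_edgeSet m _).2 (Or.inr ⟨i, Or.inr (Or.inl rfl)⟩)⟩

/-- The edge of the `i`-th path incident to `v`. -/
def thEV (m : ℕ) (i : Fin (m - 1)) : (thetaGraph m).edgeSet :=
  ⟨s(Sum.inr (Sum.inr (i, 1)), Sum.inr (Sum.inl ())),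
    (theta_mem_edgeSet m _).2 (Or.inr ⟨i, Or.inr (Or.inr rfl)⟩)⟩

lemma theta_lower (m k : ℕ) (f : (thetaGraph m).edgeSet → ℤ)
    (hfinj : Function.Injective f)
    (hf : ∀ e e' : (thetaGraph m).edgeSet, e ≠ e' →
      (∃ v, v ∈ (e : Sym2 (ThetaVert m)) ∧ v ∈ (e' : Sym2 (ThetaVert m))) →
      (f e - f e').natAbs ≤ k) :
    3 * (m - 1) ≤ 2 * k := by
  classical
  set n := m - 1 with hn
  refine theta_abstract n k (fun i => f (thEU m i)) (fun i => f (thEV m i))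
    (fun i => f (thEM m i)) (f (thE0 m)) ?_ ?_ ?_ ?_ ?_ ?_ ?_
  · -- injectivity of combined values
    intro x y h
    simp only at h
    have key : ∀ z : (Fin n ⊕ Fin n) ⊕ (Fin n ⊕ Unit),
        Sum.elim (Sum.elim (fun i => f (thEU m i)) (fun i => f (thEV m i)))
          (Sum.elim (fun i => f (thEM m i)) fun _ => f (thE0 m)) z
        = f (Sum.elim (Sum.elim (thEU m) (thEV m))
            (Sum.elim (thEM m) fun _ => thE0 m) z) := by
      rintro ((i|i)|(i|⟨⟩)) <;> rfl
    rw [key, key] at h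
    have h2 := congrArg Subtype.val (hfinj h)
    rcases x with ((i|i)|(i|⟨⟩)) <;> rcases y with ((j|j)|(j|⟨⟩)) <;>
      simp only [Sum.elim_inl, Sum.elim_inr, thEU, thEV, thEM, thE0] at h2 <;>
      first
        | rfl
        | (simp [Sym2.eq_iff, Prod.ext_iff] at h2
           all_goals (subst h2; rfl))
  · -- P P
    intro i j
    rcases eq_or_ne i j with rfl | hij
    · simp
    · refine hf _ _ ?_ ⟨Sum.inl (), ?_, ?_⟩
      · intro hc
        rw [Subtype.ext_iff] at hc
        simp [thEU, Sym2.eq_iff, Prod.ext_iff] at hc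
        exact hij hc
      · simp [thEU]
      · simp [thEU]
  · -- Q Q
    intro i j
    rcases eq_or_ne i j with rfl | hij
    · simp
    · refine hf _ _ ?_ ⟨Sum.inr (Sum.inl ()), ?_, ?_⟩
      · intro hc
        rw [Subtype.ext_iff] at hc
        simp [thEV, Sym2.eq_iff, Prod.ext_iff] at hc
        exact hij hc
      · simp [thEV]
      · simp [thEV]
  · -- P t
    intro i
    refine hf _ _ ?_ ⟨Sum.inl (), ?_, ?_⟩
    · intro hc
      rw [Subtype.ext_iff] at hc
      simp [thEU, thE0, Sym2.eq_iff] at hc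
    · simp [thEU]
    · simp [thE0]
  · -- Q t
    intro i
    refine hf _ _ ?_ ⟨Sum.inr (Sum.inl ()), ?_, ?_⟩
    · intro hc
      rw [Subtype.ext_iff] at hc
      simp [thEV, thE0, Sym2.eq_iff] at hc
    · simp [thEV]
    · simp [thE0]
  · -- M P
    intro i
    refine hf _ _ ?_ ⟨Sum.inr (Sum.inr (i, 0)), ?_, ?_⟩
    · intro hc
      rw [Subtype.ext_iff] at hc
      simp [thEM, thEU, Sym2.eq_iff] at hc
    · simp [thEM]
    · simp [thEU]
  · -- M Q
    intro i
    refine hf _ _ ?_ ⟨Sum.inr (Sum.inr (i, 1)), ?_, ?_⟩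
    · intro hc
      rw [Subtype.ext_iff] at hc
      simp [thEM, thEV, Sym2.eq_iff] at hc
    · simp [thEM]
    · simp [thEV]

def pv (l i : ℕ) : ℕ := if i < l then l + 1 + i else 2*l + 2 + i
def qv (l r i : ℕ) : ℕ := if i < l then 2*l + 1 + i else 2*l + r + 2 + i
def mv (l r i : ℕ) : ℕ := if i < l then i + 1 else 2*l + 2*r + 2 + i

def thF (m l r : ℕ) : ThetaVert m → ThetaVert m → ℕ
  | Sum.inl _, Sum.inr (Sum.inl _) => 3*l + 1
  | Sum.inl _, Sum.inr (Sum.inr p) => if p.2 = 0 then pv l p.1 else 0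
  | Sum.inr (Sum.inr p), Sum.inr (Sum.inl _) => if p.2 = 1 then qv l r p.1 else 0
  | Sum.inr (Sum.inr p), Sum.inr (Sum.inr q) => if p.2 = 0 ∧ q.2 = 1 then mv l r p.1 else 0
  | _, _ => 0

def thLabel (m l r : ℕ) : Sym2 (ThetaVert m) → ℤ :=
  Sym2.lift ⟨fun x y => (thF m l r x y : ℤ) + thF m l r y x, by intros; push_cast; ring⟩

@[simp] lemma thLabel_uv (m l r : ℕ) :
    thLabel m l r s(Sum.inl (), Sum.inr (Sum.inl ())) = 3*l + 1 := by
  simp [thLabel, thF]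

@[simp] lemma thLabel_u (m l r : ℕ) (i : Fin (m-1)) :
    thLabel m l r s(Sum.inl (), Sum.inr (Sum.inr (i, 0))) = pv l i := by
  simp [thLabel, thF]

@[simp] lemma thLabel_m (m l r : ℕ) (i : Fin (m-1)) :
    thLabel m l r s(Sum.inr (Sum.inr (i, 0)), Sum.inr (Sum.inr (i, 1))) = mv l r i := by
  simp [thLabel, thF]

@[simp] lemma thLabel_v (m l r : ℕ) (i : Fin (m-1)) :
    thLabel m l r s(Sum.inr (Sum.inr (i, 1)), Sum.inr (Sum.inl ())) = qv l r i := by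
  simp [thLabel, thF]

lemma theta_upper (m : ℕ) (hm : 2 ≤ m) :
    ∃ f : (thetaGraph m).edgeSet → ℤ, Function.Injective f ∧
      ∀ e e' : (thetaGraph m).edgeSet, e ≠ e' →
        (∃ v, v ∈ (e : Sym2 (ThetaVert m)) ∧ v ∈ (e' : Sym2 (ThetaVert m))) →
        (f e - f e').natAbs ≤ (3 * (m - 1) + 1) / 2 := by
  classical
  set n := m - 1 with hn
  set l := (n + 1) / 2 with hl
  set r := n - l with hr
  refine ⟨fun e => thLabel m l r (e : Sym2 (ThetaVert m)), ?_, ?_⟩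
  · -- injectivity
    intro e1 e2 h
    simp only at h
    obtain h1 := (theta_mem_edgeSet m e1.1).1 e1.2
    obtain h2 := (theta_mem_edgeSet m e2.1).1 e2.2
    rcases h1 with h1 | ⟨i, h1 | h1 | h1⟩ <;> rcases h2 with h2 | ⟨j, h2 | h2 | h2⟩ <;>
      rw [h1, h2] at h <;>
      simp only [thLabel_uv, thLabel_u, thLabel_m, thLabel_v] at h <;>
      (apply Subtype.ext; rw [h1, h2]) <;>
      first
        | rfl
        | (have hij : i = j := by
             apply Fin.ext
             have hi := i.isLt; have hj := j.isLt
             simp only [pv, qv, mv] at h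
             split_ifs at h <;> omega
           rw [hij]; done)
        | (exfalso
           (try have hi := i.isLt); (try have hj := j.isLt)
           simp only [pv, qv, mv] at h
           split_ifs at h <;> omega)
  · -- incidence bound
    intro e1 e2 hne hsh
    obtain ⟨z, hz1, hz2⟩ := hsh
    obtain h1 := (theta_mem_edgeSet m e1.1).1 e1.2
    obtain h2 := (theta_mem_edgeSet m e2.1).1 e2.2
    simp only
    rcases h1 with h1 | ⟨i, h1 | h1 | h1⟩ <;> rcases h2 with h2 | ⟨j, h2 | h2 | h2⟩ <;>
      rw [h1] at hz1 <;> rw [h2] at hz2 <;>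
      rw [Sym2.mem_iff] at hz1 hz2 <;>
      rw [h1, h2] <;>
      simp only [thLabel_uv, thLabel_u, thLabel_m, thLabel_v]
    all_goals try (exact absurd (Subtype.ext (h1.trans h2.symm)) hne)
    all_goals try (
      try have hi := i.isLt
      try have hj := j.isLt
      simp only [pv, qv, mv]
      split_ifs <;> omega)
    all_goals try (
      have hij : i = j := by
        rcases hz1 with rfl | rfl <;> rcases hz2 with hc | hc <;>
          first
            | (refine absurd hc ?_
               simp
               done)
            | (simp only [Sum.inr.injEq, Prod.mk.injEq] at hc
               first
                 | exact hc.1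
                 | (refine absurd hc.2 ?_
                    decide))
      subst hij
      try have hi := i.isLt
      try have hj := j.isLt
      simp only [pv, qv, mv]
      split_ifs <;> omega)
    all_goals (
      exfalso
      rcases hz1 with rfl | rfl <;> rcases hz2 with hc | hc <;>
        first
          | (refine absurd hc ?_
             simp
             done)
          | (simp only [Sum.inr.injEq, Prod.mk.injEq] at hc
             refine absurd hc.2 ?_
             decide))


theorem edgeBW_thetaGraph (m : ℕ) (hm : 2 ≤ m) :
    edgeBW (thetaGraph m) = (3 * (m - 1) + 1) / 2 := by
  obtain ⟨f, hf1, hf2⟩ := theta_upper m hm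
  have hmem : (3 * (m - 1) + 1) / 2 ∈ {k : ℕ | ∃ f : (thetaGraph m).edgeSet → ℤ,
      Function.Injective f ∧
      ∀ e e' : (thetaGraph m).edgeSet, e ≠ e' →
        (∃ v, v ∈ (e : Sym2 (ThetaVert m)) ∧ v ∈ (e' : Sym2 (ThetaVert m))) →
        ((f e - f e').natAbs ≤ (3 * (m - 1) + 1) / 2)} := ⟨f, hf1, hf2⟩
  refine le_antisymm (Nat.sInf_le hmem) (le_csInf ⟨_, hmem⟩ ?_)
  intro k hk
  obtain ⟨g, hg1, hg2⟩ := hk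
  have := theta_lower m k g hg1 hg2
  omega
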